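/- Let K be a field and R = K[X_1,…,X_n]. Every polymatroidal ideal I of R satisfies Ass(R/I^k) ⊆ Ass(R/I^{k+1}) for all integers k > 0. -/

import Mathlib

namespace Polym

open Finset

variable {n : ℕ}

/-- total degree of an exponent vector -/
def deg (a : Fin n →₀ ℕ) : ℕ := ∑ i, a i

/-- weight of `a` on a set of coordinates -/
def wt (A : Finset (Fin n)) (a : Fin n →₀ ℕ) : ℕ := ∑ i ∈ A, a i

/-- elementary exchange move -/
noncomputable def move (a : Fin n →₀ ℕ) (i j : Fin n) : Fin n →₀ ℕ :=
  a - Finsupp.single i 1 + Finsupp.single j 1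

lemma move_apply (a : Fin n →₀ ℕ) (i j x : Fin n) :
    move a i j x = a x - (if i = x then 1 else 0) + (if j = x then 1 else 0) := by
  simp [move, Finsupp.tsub_apply, Finsupp.single_apply]

lemma move_add (a : Fin n →₀ ℕ) {i : Fin n} (j : Fin n) (h : 1 ≤ a i) (x : Fin n) :
    move a i j x + (if i = x then 1 else 0) = a x + (if j = x then 1 else 0) := by
  rw [move_apply]
  rcases eq_or_ne i x with rfl | hix
  · simp; omega
  · simp [hix]

lemma wt_move_add (A : Finset (Fin n)) (a : Fin n →₀ ℕ) {i : Fin n} (j : Fin n) (h : 1 ≤ a i) :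
    wt A (move a i j) + (if i ∈ A then 1 else 0) = wt A a + (if j ∈ A then 1 else 0) := by
  have : ∀ x ∈ A, move a i j x + (if i = x then 1 else 0) = a x + (if j = x then 1 else 0) :=
    fun x _ => move_add a j h x
  have hsum := Finset.sum_congr rfl this
  rw [Finset.sum_add_distrib, Finset.sum_add_distrib] at hsum
  simpa [wt, Finset.sum_ite_eq] using hsum

lemma deg_eq_wt_univ (a : Fin n →₀ ℕ) : deg a = wt Finset.univ a := rfl

lemma deg_move (a : Fin n →₀ ℕ) {i : Fin n} (j : Fin n) (h : 1 ≤ a i) :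
    deg (move a i j) = deg a := by
  have := wt_move_add Finset.univ a j h
  simp [Finset.mem_univ] at this
  simpa [deg_eq_wt_univ] using this

lemma wt_add_wt_compl (A : Finset (Fin n)) (a : Fin n →₀ ℕ) :
    wt A a + wt Aᶜ a = deg a := by
  rw [deg_eq_wt_univ, wt, wt, wt]
  exact Finset.sum_add_sum_compl A _

lemma wt_le_deg (A : Finset (Fin n)) (a : Fin n →₀ ℕ) : wt A a ≤ deg a := by
  have := wt_add_wt_compl A a; omega

/-! ### rank function -/

section Rho

variable (B : Set (Fin n →₀ ℕ))

noncomputable def rho (A : Finset (Fin n)) : ℕ := sSup (wt A '' B)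

variable {B} {d : ℕ}

lemma rho_bddAbove (hdeg : ∀ b ∈ B, deg b = d) (A : Finset (Fin n)) :
    ∀ y ∈ wt A '' B, y ≤ d := by
  rintro y ⟨b, hb, rfl⟩
  exact (wt_le_deg A b).trans (le_of_eq (hdeg b hb))

lemma le_rho (hdeg : ∀ b ∈ B, deg b = d) {b} (hb : b ∈ B) (A : Finset (Fin n)) :
    wt A b ≤ rho B A :=
  le_csSup ⟨d, fun y hy => rho_bddAbove hdeg A y hy⟩ ⟨b, hb, rfl⟩

lemma rho_attained (hne : B.Nonempty) (hdeg : ∀ b ∈ B, deg b = d) (A : Finset (Fin n)) :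
    ∃ b ∈ B, wt A b = rho B A := by
  have h1 : (wt A '' B).Nonempty := hne.image _
  have h2 : BddAbove (wt A '' B) := ⟨d, fun y hy => rho_bddAbove hdeg A y hy⟩
  obtain ⟨b, hb, h⟩ := Nat.sSup_mem h1 h2
  exact ⟨b, hb, h⟩

end Rho

/-! ### serial exchange lemmas -/

lemma move_move_eq₁ {c : Fin n →₀ ℕ} {p₀ p₁ pa pb : Fin n}
    (h01 : p₀ ≠ p₁) (h0a : p₀ ≠ pa) (h0b : p₀ ≠ pb) (h1a : p₁ ≠ pa) (h1b : p₁ ≠ pb)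
    (hab : pa ≠ pb) (ha : 1 ≤ c pa) :
    move (move c pa pb) p₀ pa = move c p₀ pb := by
  ext x
  simp only [move_apply]
  rcases eq_or_ne x p₀ with rfl | e0
  · simp [Ne.symm h0a, Ne.symm h0b]
  · rcases eq_or_ne x pa with rfl | ea
    · simp [h0a, hab]; omega
    · rcases eq_or_ne x pb with rfl | eb
      · simp [h0b, hab]
      · simp [Ne.symm e0, Ne.symm ea, Ne.symm eb]

lemma move_move_eq₂ {c : Fin n →₀ ℕ} {p₀ p₁ pa pb : Fin n}
    (h01 : p₀ ≠ p₁) (h0a : p₀ ≠ pa) (h0b : p₀ ≠ pb) (h1a : p₁ ≠ pa) (h1b : p₁ ≠ pb)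
    (hab : pa ≠ pb) :
    move (move c pa pb) p₀ p₁ = move (move c p₀ p₁) pa pb := by
  ext x
  simp only [move_apply]
  rcases eq_or_ne x p₀ with rfl | e0
  · simp [Ne.symm h0a, Ne.symm h0b, Ne.symm h01]
  · rcases eq_or_ne x p₁ with rfl | e1
    · simp [Ne.symm h1a, Ne.symm h1b, h01]
    · rcases eq_or_ne x pa with rfl | ea
      · simp [h0a, h1a, hab]
      · rcases eq_or_ne x pb with rfl | eb
        · simp [h0b, h1b, hab]
        · simp [Ne.symm e0, Ne.symm e1, Ne.symm ea, Ne.symm eb]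

lemma move_move_eq₃ {c : Fin n →₀ ℕ} {p₀ p₁ p₂ : Fin n}
    (h01 : p₀ ≠ p₁) (h02 : p₀ ≠ p₂) (h12 : p₁ ≠ p₂) (h1 : 1 ≤ c p₁) :
    move (move c p₁ p₂) p₀ p₁ = move c p₀ p₂ := by
  ext x
  simp only [move_apply]
  rcases eq_or_ne x p₀ with rfl | e0
  · simp [Ne.symm h01, Ne.symm h02]
  · rcases eq_or_ne x p₁ with rfl | e1
    · simp [h01, h12]; omega
    · rcases eq_or_ne x p₂ with rfl | e2
      · simp [h02, h12]
      · simp [Ne.symm e0, Ne.symm e1, Ne.symm e2]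

section Serial

variable {B : Set (Fin n →₀ ℕ)}
variable (hex : ∀ a ∈ B, ∀ b ∈ B, ∀ i : Fin n, b i < a i →
    ∃ j : Fin n, a j < b j ∧ move a i j ∈ B)

include hex in
lemma serial {c : Fin n →₀ ℕ} {p₀ p₁ pa pb : Fin n}
    (h01 : p₀ ≠ p₁) (h0a : p₀ ≠ pa) (h0b : p₀ ≠ pb) (h1a : p₁ ≠ pa) (h1b : p₁ ≠ pb)
    (hab : pa ≠ pb) (h0 : 1 ≤ c p₀) (ha : 1 ≤ c pa)
    (h1 : move c p₀ p₁ ∈ B) (h2 : move c pa pb ∈ B) (hshort : move c p₀ pb ∉ B) :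
    move (move c p₀ p₁) pa pb ∈ B := by
  obtain ⟨j, hj, hmem⟩ := hex (move c pa pb) h2 (move c p₀ p₁) h1 p₀ (by
    simp only [move_apply]
    simp [Ne.symm h01, Ne.symm h0a, Ne.symm h0b]
    omega)
  have hj' : j = p₁ ∨ j = pa := by
    by_contra hcon
    push_neg at hcon
    obtain ⟨hjp1, hjpa⟩ := hcon
    simp only [move_apply] at hj
    rcases eq_or_ne j p₀ with rfl | e0
    · simp [Ne.symm h0a, Ne.symm h0b, Ne.symm h01] at hj; omega
    · rcases eq_or_ne j pb with rfl | eb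
      · simp [hab, h0b, h1b] at hj
      · simp [Ne.symm e0, Ne.symm hjp1, Ne.symm hjpa, Ne.symm eb] at hj
  rcases hj' with rfl | rfl
  · rw [move_move_eq₂ h01 h0a h0b h1a h1b hab] at hmem
    exact hmem
  · rw [move_move_eq₁ h01 h0a h0b h1a h1b hab ha] at hmem
    exact (hshort hmem).elim

include hex in
lemma consec {c : Fin n →₀ ℕ} {p₀ p₁ p₂ : Fin n}
    (h01 : p₀ ≠ p₁) (h02 : p₀ ≠ p₂) (h12 : p₁ ≠ p₂) (h0 : 1 ≤ c p₀) (hp1 : 1 ≤ c p₁)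
    (h1 : move c p₀ p₁ ∈ B) (h2 : move c p₁ p₂ ∈ B) :
    move c p₀ p₂ ∈ B := by
  obtain ⟨j, hj, hmem⟩ := hex (move c p₁ p₂) h2 (move c p₀ p₁) h1 p₀ (by
    simp only [move_apply]
    simp [Ne.symm h01, Ne.symm h02]
    omega)
  have hj' : j = p₁ := by
    by_contra hjp1
    simp only [move_apply] at hj
    rcases eq_or_ne j p₀ with rfl | e0
    · simp [Ne.symm h01, Ne.symm h02] at hj; omega
    · rcases eq_or_ne j p₂ with rfl | e2
      · simp [h12, h02] at hj
      · simp [Ne.symm e0, Ne.symm (show j ≠ p₁ from hjp1), Ne.symm e2] at hj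
  subst hj'
  rwa [move_move_eq₃ h01 h02 h12 hp1] at hmem

end Serial

/-! ### states and reachability -/

section State

variable (B : Set (Fin n →₀ ℕ)) (m : Fin n →₀ ℕ) {k : ℕ}

def Sf (σ : Fin k → (Fin n →₀ ℕ)) (x : Fin n) : ℕ := ∑ l, σ l x

def Gam (σ : Fin k → (Fin n →₀ ℕ)) : ℕ := ∑ x, min (Sf σ x) (m x)

def arc (σ : Fin k → (Fin n →₀ ℕ)) (p q : Fin n) : Prop :=
  ∃ l, 1 ≤ σ l p ∧ move (σ l) p q ∈ B

def reachN (σ : Fin k → (Fin n →₀ ℕ)) : ℕ → Fin n → Prop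
  | 0, q => m q < Sf σ q
  | (t+1), q => ∃ p, reachN σ t p ∧ arc B σ p q

lemma reachN_chain {σ : Fin k → (Fin n →₀ ℕ)} :
    ∀ {t q}, reachN B m σ t q →
      ∃ c : ℕ → Fin n, c t = q ∧ (m (c 0) < Sf σ (c 0)) ∧ ∀ s < t, arc B σ (c s) (c (s+1)) := by
  intro t
  induction t with
  | zero => intro q hq; exact ⟨fun _ => q, rfl, hq, by omega⟩
  | succ t IH =>
    rintro q ⟨p, hp, harc⟩
    obtain ⟨c, hct, hc0, hcarc⟩ := IH hp
    refine ⟨fun s => if s ≤ t then c s else q, by simp, by simpa using hc0, ?_⟩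
    intro s hs
    rcases lt_or_eq_of_le (Nat.lt_succ_iff.mp hs) with h | h
    · have h1 : s ≤ t := le_of_lt h
      have h2 : s + 1 ≤ t := h
      simp only [if_pos h1, if_pos h2]
      exact hcarc s h
    · subst h
      simp only [le_refl, if_pos, Nat.lt_irrefl]
      rw [if_neg (by omega)]
      rw [hct]
      exact harc

lemma chain_reachN {σ : Fin k → (Fin n →₀ ℕ)} (c : ℕ → Fin n) (t : ℕ)
    (h0 : m (c 0) < Sf σ (c 0)) (harc : ∀ s < t, arc B σ (c s) (c (s+1))) :
    reachN B m σ t (c t) := by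
  induction t with
  | zero => exact h0
  | succ t IH =>
    exact ⟨c t, IH (fun s hs => harc s (by omega)), harc t (by omega)⟩

end State

section Update

variable (m : Fin n →₀ ℕ) {k : ℕ}

lemma Sf_update_move {σ : Fin k → (Fin n →₀ ℕ)} {l : Fin k} {p : Fin n} (q : Fin n)
    (hp : 1 ≤ σ l p) (x : Fin n) :
    Sf (Function.update σ l (move (σ l) p q)) x + (if p = x then 1 else 0)
      = Sf σ x + (if q = x then 1 else 0) := by
  have hcomp : ∀ w : Fin n →₀ ℕ, ∀ l' : Fin k,
      (Function.update σ l w) l' x = Function.update (fun l'' => σ l'' x) l (w x) l' := by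
    intro w l'
    rcases eq_or_ne l' l with rfl | h
    · simp
    · simp [Function.update_of_ne h]
  unfold Sf
  rw [Finset.sum_congr rfl (fun l' _ => hcomp _ l'),
    Finset.sum_update_of_mem (Finset.mem_univ l)]
  have hsplit : ∑ l', σ l' x = σ l x + ∑ l' ∈ Finset.univ \ {l}, σ l' x := by
    rw [Finset.sum_eq_sum_sdiff_singleton_add (Finset.mem_univ l)]; ring
  rw [hsplit]
  have := move_add (σ l) q hp x
  omega

lemma gamma_eq_of_move {σ : Fin k → (Fin n →₀ ℕ)} {l : Fin k} {p q : Fin n}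
    (hp : 1 ≤ σ l p) (hX : m p < Sf σ p) (hq : Sf σ q = m q) (hpq : p ≠ q) :
    Gam m (Function.update σ l (move (σ l) p q)) = Gam m σ := by
  unfold Gam
  apply Finset.sum_congr rfl
  intro x _
  have h := Sf_update_move q hp x
  rcases eq_or_ne p x with rfl | hpx
  · simp [hpq] at h; omega
  · rcases eq_or_ne q x with rfl | hqx
    · simp [hpx, hpq] at h ⊢
      omega
    · simp [hpx, hqx] at h; omega

lemma gamma_lt_of_move {σ : Fin k → (Fin n →₀ ℕ)} {l : Fin k} {p q : Fin n}
    (hp : 1 ≤ σ l p) (hX : m p < Sf σ p) (hq : Sf σ q < m q) (hpq : p ≠ q) :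
    Gam m σ < Gam m (Function.update σ l (move (σ l) p q)) := by
  unfold Gam
  apply Finset.sum_lt_sum
  · intro x _
    have h := Sf_update_move q hp x
    rcases eq_or_ne p x with rfl | hpx
    · simp [hpq] at h; omega
    · rcases eq_or_ne q x with rfl | hqx
      · simp [hpx, hpq] at h; omega
      · simp [hpx, hqx] at h; omega
  · refine ⟨q, Finset.mem_univ q, ?_⟩
    have h := Sf_update_move q hp q
    simp [hpq] at h
    omega

end Update


/-! ### the augmentation lemma -/

section Aug

variable {B : Set (Fin n →₀ ℕ)} {m : Fin n →₀ ℕ} {k : ℕ}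

lemma aug (hex : ∀ a ∈ B, ∀ b ∈ B, ∀ i : Fin n, b i < a i →
      ∃ j : Fin n, a j < b j ∧ move a i j ∈ B) :
    ∀ t : ℕ, ∀ σ : Fin k → (Fin n →₀ ℕ), (∀ l, σ l ∈ B) →
      (∃ q, reachN B m σ t q ∧ Sf σ q < m q) →
      ∃ σ' : Fin k → (Fin n →₀ ℕ), (∀ l, σ' l ∈ B) ∧ Gam m σ < Gam m σ' := by
  intro t
  induction t using Nat.strong_induction_on with
  | _ t IH =>
  intro σ hσ hEx
  by_cases hE : ∃ t' < t, ∃ q', reachN B m σ t' q' ∧ Sf σ q' < m q'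
  · obtain ⟨t', ht', hq⟩ := hE
    exact IH t' ht' σ hσ hq
  push_neg at hE
  have hnos : ∀ t' < t, ∀ q', reachN B m σ t' q' → m q' ≤ Sf σ q' := hE
  obtain ⟨q, hreach, hslack⟩ := hEx
  obtain ⟨c, hct, hc0, harc⟩ := reachN_chain B m hreach
  -- t = 0 is impossible
  rcases Nat.eq_zero_or_pos t with rfl | ht0
  · exact absurd hreach (by simp [reachN]; omega)
  -- minimality facts
  have F2 : ∀ a, 0 < a → a ≤ t → ¬ (m (c a) < Sf σ (c a)) := by
    intro a ha0 hat hX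
    have hch := chain_reachN B m (fun r => c (a + r)) (t - a)
      (by simpa using hX)
      (fun s hs => by
        have h := harc (a + s) (by omega)
        have e : a + s + 1 = a + (s + 1) := by omega
        rw [e] at h
        exact h)
    have he : a + (t - a) = t := by omega
    have hch2 : reachN B m σ (t - a) (c (a + (t - a))) := hch
    rw [he, hct] at hch2
    have hch := hch2
    exact absurd hslack (by
      have := hnos (t - a) (by omega) q hch
      omega)
  have F3 : ∀ a b, a + 2 ≤ b → b ≤ t → ¬ arc B σ (c a) (c b) := by
    intro a b hab hbt harcab
    set Δ := b - a - 1 with hΔ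
    have hΔ1 : 1 ≤ Δ := by omega
    set c2 : ℕ → Fin n := fun r => if r ≤ a then c r else c (r + Δ) with hc2
    have hch := chain_reachN B m c2 (t - Δ)
      (by simp only [hc2]; rw [if_pos (by omega : 0 ≤ a)]; exact hc0)
      (fun s hs => by
        rcases lt_trichotomy s a with h | rfl | h
        · simp only [hc2]
          rw [if_pos (by omega : s ≤ a), if_pos (by omega : s + 1 ≤ a)]
          exact harc s (by omega)
        · simp only [hc2]
          rw [if_pos (le_refl s), if_neg (by omega : ¬ (s + 1 ≤ s))]
          have e : s + 1 + Δ = b := by omega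
          rw [e]
          exact harcab
        · simp only [hc2]
          rw [if_neg (by omega : ¬ (s ≤ a)), if_neg (by omega : ¬ (s + 1 ≤ a))]
          have e : s + 1 + Δ = s + Δ + 1 := by omega
          rw [e]
          exact harc (s + Δ) (by omega))
    have he : c2 (t - Δ) = q := by
      simp only [hc2]
      rw [if_neg (by omega : ¬ (t - Δ ≤ a))]
      have e : t - Δ + Δ = t := by omega
      rw [e, hct]
    rw [he] at hch
    have := hnos (t - Δ) (by omega) q hch
    omega
  have F4 : ∀ a b, a < b → b ≤ t → c a ≠ c b := by
    intro a b hab hbt heq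
    rcases eq_or_lt_of_le hbt with rfl | hblt
    · -- b = t : then c a is slack and reachable at step a < t
      have hch := chain_reachN B m c a hc0 (fun s hs => harc s (by omega))
      have := hnos a (by omega) (c a) hch
      rw [heq, hct] at this
      omega
    · set Δ := b - a with hΔ
      set c2 : ℕ → Fin n := fun r => if r ≤ a then c r else c (r + Δ) with hc2
      have hch := chain_reachN B m c2 (t - Δ)
        (by simp only [hc2]; rw [if_pos (by omega : 0 ≤ a)]; exact hc0)
        (fun s hs => by
          rcases lt_trichotomy s a with h | rfl | h
          · simp only [hc2]
            rw [if_pos (by omega : s ≤ a), if_pos (by omega : s + 1 ≤ a)]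
            exact harc s (by omega)
          · simp only [hc2]
            rw [if_pos (le_refl s), if_neg (by omega : ¬ (s + 1 ≤ s))]
            have e : s + 1 + Δ = b + 1 := by omega
            rw [e, heq]
            exact harc b (by omega)
          · simp only [hc2]
            rw [if_neg (by omega : ¬ (s ≤ a)), if_neg (by omega : ¬ (s + 1 ≤ a))]
            have e : s + 1 + Δ = s + Δ + 1 := by omega
            rw [e]
            exact harc (s + Δ) (by omega))
      have he : c2 (t - Δ) = q := by
        simp only [hc2]
        rw [if_neg (by omega : ¬ (t - Δ ≤ a))]
        have e : t - Δ + Δ = t := by omega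
        rw [e, hct]
      rw [he] at hch
      have := hnos (t - Δ) (by omega) q hch
      omega
  -- first arc
  obtain ⟨l₀, hl0p, hl0B⟩ := harc 0 (by omega)
  rcases eq_or_lt_of_le (show 1 ≤ t from ht0) with h1t | ht2
  · -- t = 1
    have hq1 : c 1 = q := by rw [← hct, ← h1t]
    refine ⟨Function.update σ l₀ (move (σ l₀) (c 0) (c 1)), ?_, ?_⟩
    · intro l
      rcases eq_or_ne l l₀ with rfl | h
      · simpa using hl0B
      · simpa [Function.update_of_ne h] using hσ l
    · exact gamma_lt_of_move m hl0p hc0 (by rw [hq1]; exact hslack)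
        (F4 0 1 (by omega) (by omega))
  -- t ≥ 2
  have hc01 : c 0 ≠ c 1 := F4 0 1 (by omega) (by omega)
  set σ' := Function.update σ l₀ (move (σ l₀) (c 0) (c 1)) with hσ'def
  have hσ'B : ∀ l, σ' l ∈ B := by
    intro l
    rcases eq_or_ne l l₀ with rfl | h
    · simpa [hσ'def] using hl0B
    · simpa [hσ'def, Function.update_of_ne h] using hσ l
  have hSf' : ∀ x, Sf σ' x + (if c 0 = x then 1 else 0) = Sf σ x + (if c 1 = x then 1 else 0) := by
    have h := Sf_update_move (σ := σ) (l := l₀) (c 1) hl0p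
    rw [← hσ'def] at h
    exact h
  have hc1eq : Sf σ (c 1) = m (c 1) := by
    have h1 := F2 1 (by omega) (by omega)
    have h2 := hnos 1 (by omega) (c 1)
      (chain_reachN B m c 1 hc0 (fun s hs => harc s (by omega)))
    omega
  have hGam : Gam m σ' = Gam m σ := by
    have h := gamma_eq_of_move (m := m) (σ := σ) (l := l₀) hl0p hc0 hc1eq hc01
    rw [← hσ'def] at h
    exact h
  have hX' : m (c 1) < Sf σ' (c 1) := by
    have := hSf' (c 1)
    simp [hc01] at this
    omega
  have hqne0 : c 0 ≠ q := by rw [← hct]; exact F4 0 t (by omega) (le_refl t)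
  have hqne1 : c 1 ≠ q := by rw [← hct]; exact F4 1 t (by omega) (le_refl t)
  have hslack' : Sf σ' q < m q := by
    have := hSf' q
    simp [hqne0, hqne1] at this
    omega
  have harc' : ∀ s, 1 ≤ s → s < t → arc B σ' (c s) (c (s + 1)) := by
    intro s hs1 hst
    obtain ⟨ls, hlsp, hlsB⟩ := harc s hst
    rcases eq_or_ne ls l₀ with rfl | hne
    · -- same part
      rcases eq_or_lt_of_le hs1 with hs1' | hs2
      · -- s = 1 : impossible, gives a shortcut
        exfalso
        subst hs1'
        have hlsB' : move (σ ls) (c 1) (c 2) ∈ B := by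
          have e : (1 : ℕ) + 1 = 2 := rfl
          rw [← e]; exact hlsB
        have hsh : move (σ ls) (c 0) (c 2) ∈ B :=
          consec hex (c := σ ls) hc01 (F4 0 2 (by omega) (by omega))
            (F4 1 2 (by omega) (by omega)) hl0p hlsp hl0B hlsB'
        exact F3 0 2 (by omega) (by omega) ⟨ls, hl0p, hsh⟩
      · -- s ≥ 2
        have hshort : move (σ ls) (c 0) (c (s+1)) ∉ B := by
          intro hmem
          exact F3 0 (s+1) (by omega) (by omega) ⟨ls, hl0p, hmem⟩
        have hw := serial hex hc01 (F4 0 s (by omega) (by omega))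
          (F4 0 (s+1) (by omega) (by omega)) (F4 1 s (by omega) (by omega))
          (F4 1 (s+1) (by omega) (by omega)) (F4 s (s+1) (by omega) (by omega))
          hl0p hlsp hl0B hlsB hshort
        refine ⟨ls, ?_, ?_⟩
        · have : σ' ls = move (σ ls) (c 0) (c 1) := by simp [hσ'def]
          rw [this, move_apply,
            if_neg (fun h => (F4 0 s (by omega) (by omega)) h),
            if_neg (fun h => (F4 1 s (by omega) (by omega)) h)]
          omega
        · have : σ' ls = move (σ ls) (c 0) (c 1) := by simp [hσ'def]
          rw [this]
          exact hw
    · refine ⟨ls, ?_, ?_⟩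
      · rw [hσ'def, Function.update_of_ne hne]; exact hlsp
      · rw [hσ'def, Function.update_of_ne hne]; exact hlsB
  have hreach' : reachN B m σ' (t - 1) q := by
    have hch := chain_reachN B m (fun r => c (1 + r)) (t - 1)
      (by simpa using hX')
      (fun s hs => by
        have h := harc' (1 + s) (by omega) (by omega)
        have e : 1 + s + 1 = 1 + (s + 1) := by omega
        rw [e] at h
        exact h)
    have he : 1 + (t - 1) = t := by omega
    have hch2 : reachN B m σ' (t - 1) (c (1 + (t - 1))) := hch
    rw [he, hct] at hch2
    exact hch2
  obtain ⟨σ'', hσ''B, hlt⟩ := IH (t - 1) (by omega) σ' hσ'B ⟨q, hreach', hslack'⟩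
  exact ⟨σ'', hσ''B, by omega⟩

end Aug

/-! ### the core covering theorem -/

noncomputable def dist (b c : Fin n →₀ ℕ) : ℕ := ∑ x, (b x - c x)

section CoreThm

variable {B : Set (Fin n →₀ ℕ)} {d : ℕ}

theorem core (hne : B.Nonempty) (hdeg : ∀ b ∈ B, deg b = d)
    (hex : ∀ a ∈ B, ∀ b ∈ B, ∀ i : Fin n, b i < a i →
      ∃ j : Fin n, a j < b j ∧ move a i j ∈ B)
    (k : ℕ) (m : Fin n →₀ ℕ)
    (cond : ∀ A : Finset (Fin n), k * d ≤ wt Aᶜ m + k * rho B A) :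
    ∃ σ : Fin k → (Fin n →₀ ℕ), (∀ l, σ l ∈ B) ∧ ∀ x, Sf σ x ≤ m x := by
  classical
  obtain ⟨b₀, hb₀⟩ := hne
  set GV : Set ℕ := {g | ∃ σ : Fin k → (Fin n →₀ ℕ), (∀ l, σ l ∈ B) ∧ Gam m σ = g} with hGV
  have hGVne : GV.Nonempty := ⟨Gam m (fun _ => b₀), fun _ => b₀, fun _ => hb₀, rfl⟩
  have hGVbdd : BddAbove GV := by
    refine ⟨∑ x, m x, ?_⟩
    rintro g ⟨σ, hσ, rfl⟩
    exact Finset.sum_le_sum (fun x _ => min_le_right _ _)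
  obtain ⟨σ, hσB, hgam⟩ := Nat.sSup_mem hGVne hGVbdd
  by_cases hS : ∀ x, Sf σ x ≤ m x
  · exact ⟨σ, hσB, hS⟩
  push_neg at hS
  obtain ⟨x₀, hx₀⟩ := hS
  exfalso
  set Reach : Fin n → Prop := fun p => ∃ t, reachN B m σ t p with hReach
  by_cases hA : ∃ q, Reach q ∧ Sf σ q < m q
  · obtain ⟨q, ⟨t, hq⟩, hqs⟩ := hA
    obtain ⟨σ'', hσ''B, hlt⟩ := aug hex t σ hσB ⟨q, hq, hqs⟩
    have : Gam m σ'' ≤ sSup GV := le_csSup hGVbdd ⟨σ'', hσ''B, rfl⟩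
    omega
  push_neg at hA
  have hnoslack : ∀ q, Reach q → m q ≤ Sf σ q := hA
  set RF : Finset (Fin n) := Finset.univ.filter Reach with hRF
  set T : Finset (Fin n) := RFᶜ with hT
  have hmemRF : ∀ x, x ∈ RF ↔ Reach x := by
    intro x; simp [hRF]
  have hmemT : ∀ x, x ∈ T ↔ ¬ Reach x := by
    intro x; simp [hT, hRF]
  -- each part is maximal on T
  have maxl : ∀ l, wt T (σ l) = rho B T := by
    intro l
    obtain ⟨br, hbr, hbrwt⟩ := rho_attained ⟨b₀, hb₀⟩ hdeg T
    set W : Set (Fin n →₀ ℕ) := {b | b ∈ B ∧ rho B T ≤ wt T b} with hW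
    have hWne : W.Nonempty := ⟨br, hbr, le_of_eq hbrwt.symm⟩
    obtain ⟨bs, hbsW, hbsd0⟩ := Nat.sInf_mem (hWne.image (fun b => dist b (σ l)))
    have hbsd : dist bs (σ l) = sInf ((fun b => dist b (σ l)) '' W) := hbsd0
    obtain ⟨hbsB, hbsge⟩ := hbsW
    have hbswt : wt T bs = rho B T := le_antisymm (le_rho hdeg hbsB T) hbsge
    -- (a) : coordinates where bs exceeds σ l are unreachable
    have ha : ∀ u, σ l u < bs u → ¬ Reach u := by
      intro u hu hRu
      obtain ⟨j, hj, hmove⟩ := hex bs hbsB (σ l) (hσB l) u hu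
      have huj : u ≠ j := by intro h; rw [h] at hu; omega
      have hau : move bs u j u = bs u - 1 := by
        rw [move_apply]; simp [Ne.symm huj]
      have haj : move bs u j j = bs j + 1 := by
        rw [move_apply]; simp [huj]
      have hdlt : dist (move bs u j) (σ l) < dist bs (σ l) := by
        unfold dist
        apply Finset.sum_lt_sum
        · intro x _
          rcases eq_or_ne x u with rfl | hxu
          · rw [hau]; omega
          · rcases eq_or_ne x j with rfl | hxj
            · rw [haj]; omega
            · have h : move bs u j x = bs x := by
                rw [move_apply]; simp [Ne.symm hxu, Ne.symm hxj]
              rw [h]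
        · refine ⟨u, Finset.mem_univ u, ?_⟩
          rw [hau]; omega
      have hnW : move bs u j ∉ W := by
        intro hmem
        have h1 : dist (move bs u j) (σ l) ∈ (fun b => dist b (σ l)) '' W :=
          ⟨move bs u j, hmem, rfl⟩
        have := Nat.sInf_le h1
        omega
      have hwtlt : wt T (move bs u j) < rho B T := by
        rcases Nat.lt_or_ge (wt T (move bs u j)) (rho B T) with h | h
        · exact h
        · exact absurd ⟨hmove, h⟩ hnW
      have hbu : 1 ≤ bs u := by omega
      have hwm := wt_move_add T bs j hbu
      have huT : u ∉ T := by rw [hmemT]; exact fun h => h hRu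
      rw [if_neg huT] at hwm
      by_cases hjT : j ∈ T
      · rw [if_pos hjT] at hwm; omega
      · rw [if_neg hjT] at hwm; omega
    -- (b) : coordinates where σ l exceeds bs are unreachable
    have hb : ∀ p, bs p < σ l p → ¬ Reach p := by
      intro p hp hRp
      obtain ⟨j, hj, hmove⟩ := hex (σ l) (hσB l) bs hbsB p hp
      refine ha j hj ?_
      obtain ⟨tp, htp⟩ := hRp
      exact ⟨tp + 1, p, htp, ⟨l, by omega, hmove⟩⟩
    -- agreement on RF
    have hagree : ∀ x ∈ RF, bs x = σ l x := by
      intro x hx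
      have hRx := (hmemRF x).mp hx
      rcases lt_trichotomy (bs x) (σ l x) with h | h | h
      · exact absurd hRx (hb x h)
      · exact h
      · exact absurd hRx (ha x h)
    have h1 : wt RF bs = wt RF (σ l) := Finset.sum_congr rfl (fun x hx => hagree x hx)
    have h2 := wt_add_wt_compl RF bs
    have h3 := wt_add_wt_compl RF (σ l)
    rw [hdeg bs hbsB] at h2
    rw [hdeg (σ l) (hσB l)] at h3
    rw [← hT] at h2 h3
    omega
  -- final counting
  have hsum1 : ∑ l : Fin k, wt RF (σ l) + k * rho B T = k * d := by
    have : ∀ l : Fin k, wt RF (σ l) + rho B T = d := by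
      intro l
      have h2 := wt_add_wt_compl RF (σ l)
      rw [hdeg (σ l) (hσB l), ← hT, maxl l] at h2
      exact h2
    calc ∑ l : Fin k, wt RF (σ l) + k * rho B T
        = ∑ l : Fin k, (wt RF (σ l) + rho B T) := by
          rw [Finset.sum_add_distrib, Finset.sum_const, Finset.card_univ, Fintype.card_fin,
            smul_eq_mul]
      _ = ∑ l : Fin k, d := Finset.sum_congr rfl (fun l _ => this l)
      _ = k * d := by rw [Finset.sum_const, Finset.card_univ, Fintype.card_fin, smul_eq_mul]
  have hswap : ∑ x ∈ RF, Sf σ x = ∑ l : Fin k, wt RF (σ l) := by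
    unfold Sf wt
    exact Finset.sum_comm
  have hlt : ∑ x ∈ RF, m x < ∑ x ∈ RF, Sf σ x := by
    apply Finset.sum_lt_sum
    · intro x hx
      exact hnoslack x ((hmemRF x).mp hx)
    · refine ⟨x₀, ?_, hx₀⟩
      rw [hmemRF]
      exact ⟨0, hx₀⟩
  have hcond := cond T
  have hTc : Tᶜ = RF := by rw [hT, compl_compl]
  rw [hTc] at hcond
  have : wt RF m = ∑ x ∈ RF, m x := rfl
  omega

end CoreThm

/-! ### list lemmas -/

lemma list_sum_wt (A : Finset (Fin n)) :
    ∀ L : List (Fin n →₀ ℕ), wt A L.sum = (L.map (wt A)).sum := by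
  intro L
  induction L with
  | nil => simp [wt]
  | cons b L IH =>
    simp only [List.sum_cons, List.map_cons]
    rw [← IH]
    unfold wt
    rw [← Finset.sum_add_distrib]
    exact Finset.sum_congr rfl (fun x _ => by simp)

lemma list_map_le_mul {g : (Fin n →₀ ℕ) → ℕ} {bound : ℕ} :
    ∀ {L : List (Fin n →₀ ℕ)}, (∀ b ∈ L, g b ≤ bound) → (L.map g).sum ≤ L.length * bound := by
  intro L
  induction L with
  | nil => simp
  | cons b L IH =>
    intro h
    simp only [List.map_cons, List.sum_cons, List.length_cons]
    have h1 := IH (fun x hx => h x (List.mem_cons_of_mem b hx))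
    have h2 := h b (List.mem_cons_self)
    have : (L.length + 1) * bound = L.length * bound + bound := Nat.succ_mul _ _
    omega

lemma list_wt_wt_compl {d : ℕ} (A : Finset (Fin n)) :
    ∀ {L : List (Fin n →₀ ℕ)}, (∀ b ∈ L, deg b = d) →
      (L.map (wt A)).sum + (L.map (wt Aᶜ)).sum = L.length * d := by
  intro L
  induction L with
  | nil => simp
  | cons b L IH =>
    intro h
    simp only [List.map_cons, List.sum_cons, List.length_cons]
    have h1 := IH (fun x hx => h x (List.mem_cons_of_mem b hx))
    have h2 : wt A b + wt Aᶜ b = d := by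
      rw [wt_add_wt_compl]; exact h b (List.mem_cons_self)
    have : (L.length + 1) * d = L.length * d + d := Nat.succ_mul _ _
    omega

end Polym

/-! ### Monomial ideal algebra -/

open MvPolynomial Polym Pointwise

namespace PolymAlg

variable {n : ℕ} {K : Type*} [Field K]

def sumSet (S T : Set (Fin n →₀ ℕ)) : Set (Fin n →₀ ℕ) := Set.image2 (· + ·) S T

def pows (S : Set (Fin n →₀ ℕ)) : ℕ → Set (Fin n →₀ ℕ)
  | 0 => {0}
  | (j+1) => sumSet (pows S j) S

lemma span_monomial_mul (S T : Set (Fin n →₀ ℕ)) :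
    Ideal.span ((fun a => monomial a (1:K)) '' S) * Ideal.span ((fun a => monomial a (1:K)) '' T)
      = Ideal.span ((fun a => monomial a (1:K)) '' sumSet S T) := by
  rw [Ideal.span_mul_span']
  congr 1
  calc ((fun a => monomial a (1:K)) '' S) * ((fun a => monomial a (1:K)) '' T)
      = Set.image2 (fun a b => monomial a (1:K) * monomial b (1:K)) S T := by
        rw [← Set.image2_mul, Set.image2_image_left, Set.image2_image_right]
    _ = Set.image2 (fun a b => monomial (a + b) (1:K)) S T := by
        apply Set.image2_congr
        intro a _ b _
        rw [monomial_mul, one_mul]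
    _ = (fun a => monomial a (1:K)) '' sumSet S T := by
        unfold sumSet
        rw [Set.image_image2]

lemma pow_span {I : Ideal (MvPolynomial (Fin n) K)} {B : Set (Fin n →₀ ℕ)}
    (hIB : I = Ideal.span ((fun a => monomial a (1:K)) '' B)) :
    ∀ j, I ^ j = Ideal.span ((fun a => monomial a (1:K)) '' pows B j) := by
  intro j
  induction j with
  | zero =>
    rw [pow_zero, Ideal.one_eq_top, show pows B 0 = {0} from rfl, Set.image_singleton,
      show (monomial (0 : Fin n →₀ ℕ) (1:K)) = 1 by simp, Ideal.span_singleton_one]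
  | succ j IH =>
    rw [pow_succ, IH]
    conv_lhs => rw [hIB]
    rw [span_monomial_mul]
    rfl

lemma mem_pows_iff {B : Set (Fin n →₀ ℕ)} {j : ℕ} {w : Fin n →₀ ℕ} :
    w ∈ pows B j ↔ ∃ L : List (Fin n →₀ ℕ), L.length = j ∧ (∀ b ∈ L, b ∈ B) ∧ L.sum = w := by
  induction j generalizing w with
  | zero =>
    constructor
    · intro hw
      refine ⟨[], rfl, by simp, ?_⟩
      simpa [pows] using hw.symm
    · rintro ⟨L, hL, _, hsum⟩
      rw [List.length_eq_zero_iff] at hL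
      subst hL
      simp only [List.sum_nil] at hsum
      simp [pows, ← hsum]
  | succ j IH =>
    constructor
    · intro hw
      obtain ⟨x, hx, b, hb, hxb⟩ := hw
      obtain ⟨L, hlen, hLB, hsum⟩ := IH.mp hx
      refine ⟨b :: L, by simp [hlen], ?_, ?_⟩
      · intro c hc
        rcases List.mem_cons.mp hc with rfl | hc
        · exact hb
        · exact hLB c hc
      · rw [List.sum_cons, hsum, add_comm]
        exact hxb
    · rintro ⟨L, hlen, hLB, hsum⟩
      rcases L with _ | ⟨b, L'⟩
      · simp at hlen
      · simp only [List.length_cons, Nat.add_right_cancel_iff] at hlen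
        refine ⟨L'.sum, IH.mpr ⟨L', hlen, fun c hc => hLB c (List.mem_cons_of_mem b hc), rfl⟩,
          b, hLB b (List.mem_cons_self), ?_⟩
        show L'.sum + b = w
        rw [add_comm, ← List.sum_cons]
        exact hsum

lemma mon_list_mem {I : Ideal (MvPolynomial (Fin n) K)} {B : Set (Fin n →₀ ℕ)}
    (hIB : I = Ideal.span ((fun a => monomial a (1:K)) '' B)) :
    ∀ (L : List (Fin n →₀ ℕ)), (∀ b ∈ L, b ∈ B) → (monomial L.sum (1:K)) ∈ I ^ L.length := by
  intro L
  induction L with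
  | nil => simp
  | cons b L IH =>
    intro h
    have hb : monomial b (1:K) ∈ I := by
      rw [hIB]
      exact Ideal.subset_span ⟨b, h b (List.mem_cons_self), rfl⟩
    have hL := IH (fun c hc => h c (List.mem_cons_of_mem b hc))
    have : (monomial (b + L.sum) (1:K)) = monomial b (1:K) * monomial L.sum (1:K) := by
      rw [monomial_mul, one_mul]
    simp only [List.sum_cons, List.length_cons]
    rw [this, pow_succ']
    exact Ideal.mul_mem_mul hb hL

lemma monomial_mem_pow {I : Ideal (MvPolynomial (Fin n) K)} {B : Set (Fin n →₀ ℕ)}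
    (hIB : I = Ideal.span ((fun a => monomial a (1:K)) '' B)) {k : ℕ}
    (a : Fin n →₀ ℕ) (c : K) {L : List (Fin n →₀ ℕ)} (hlen : L.length = k)
    (hL : ∀ b ∈ L, b ∈ B) (hle : L.sum ≤ a) :
    monomial a c ∈ I ^ k := by
  have h1 := mon_list_mem hIB L hL
  rw [hlen] at h1
  have h2 : monomial a c = monomial (a - L.sum) c * monomial L.sum 1 := by
    rw [monomial_mul, mul_one, tsub_add_cancel_of_le hle]
  rw [h2]
  exact Ideal.mul_mem_left _ _ h1

theorem colon_step
    {I : Ideal (MvPolynomial (Fin n) K)} {B : Set (Fin n →₀ ℕ)} {d : ℕ}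
    (hBne : B.Nonempty)
    (hdeg : ∀ b ∈ B, Polym.deg b = d)
    (hIB : I = Ideal.span ((fun a => monomial a (1:K)) '' B))
    (hex : ∀ a ∈ B, ∀ b ∈ B, ∀ i : Fin n, b i < a i →
      ∃ j : Fin n, a j < b j ∧ Polym.move a i j ∈ B)
    (k : ℕ) (F : MvPolynomial (Fin n) K)
    (hFg : ∀ g ∈ B, F * monomial g 1 ∈ I ^ (k+1)) :
    F ∈ I ^ k := by
  rw [pow_span hIB k, mem_ideal_span_monomial_image]
  intro a ha
  have hyp : ∀ v ∈ B, ∃ L : List (Fin n →₀ ℕ),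
      L.length = k + 1 ∧ (∀ b ∈ L, b ∈ B) ∧ L.sum ≤ a + v := by
    intro v hv
    have hmem := hFg v hv
    rw [pow_span hIB (k+1), mem_ideal_span_monomial_image] at hmem
    have hsupp : a + v ∈ (F * monomial v (1:K)).support := by
      rw [mem_support_iff, coeff_mul_monomial, mul_one]
      exact mem_support_iff.mp ha
    obtain ⟨w, hw, hwle⟩ := hmem _ hsupp
    obtain ⟨L, hlen, hLB, hLsum⟩ := mem_pows_iff.mp hw
    refine ⟨L, hlen, hLB, ?_⟩
    rw [hLsum]
    exact hwle
  have cond : ∀ A : Finset (Fin n), k * d ≤ Polym.wt Aᶜ a + k * Polym.rho B A := by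
    intro A
    obtain ⟨v, hv, hvwt⟩ := Polym.rho_attained hBne hdeg A
    obtain ⟨L, hlen, hLB, hle⟩ := hyp v hv
    have h1 : (L.map (Polym.wt A)).sum + (L.map (Polym.wt Aᶜ)).sum = k * d + d := by
      rw [Polym.list_wt_wt_compl A (fun b hb => hdeg b (hLB b hb)), hlen, Nat.succ_mul]
    have h2 : (L.map (Polym.wt A)).sum ≤ k * Polym.rho B A + Polym.rho B A := by
      have h := Polym.list_map_le_mul (g := Polym.wt A) (bound := Polym.rho B A)
        (L := L) (fun b hb => Polym.le_rho hdeg (hLB b hb) A)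
      rw [hlen, Nat.succ_mul] at h
      exact h
    have h3 : (L.map (Polym.wt Aᶜ)).sum ≤ Polym.wt Aᶜ a + Polym.wt Aᶜ v := by
      rw [← Polym.list_sum_wt]
      have hp : ∀ x, L.sum x ≤ (a + v) x := fun x => (Finsupp.le_def.mp hle) x
      calc Polym.wt Aᶜ L.sum ≤ Polym.wt Aᶜ (a + v) :=
            Finset.sum_le_sum (fun x _ => hp x)
        _ = Polym.wt Aᶜ a + Polym.wt Aᶜ v := by
            unfold Polym.wt
            rw [← Finset.sum_add_distrib]
            exact Finset.sum_congr rfl (fun x _ => by simp)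
    have h4 : Polym.wt A v + Polym.wt Aᶜ v = d := by
      rw [Polym.wt_add_wt_compl]; exact hdeg v hv
    omega
  obtain ⟨σc, hσB, hσle⟩ := Polym.core hBne hdeg hex k a cond
  refine ⟨(List.ofFn σc).sum, ?_, ?_⟩
  · refine mem_pows_iff.mpr ⟨List.ofFn σc, by simp, ?_, rfl⟩
    intro b hb
    obtain ⟨l, rfl⟩ := List.mem_ofFn.mp hb
    exact hσB l
  · rw [Finsupp.le_def]
    intro x
    have h1 : (List.ofFn σc).sum x = Polym.Sf σc x := by
      rw [List.sum_ofFn, Finsupp.finset_sum_apply]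
      rfl
    rw [h1]
    exact hσle x

end PolymAlg


lemma ann_eq_colon {R : Type*} [CommRing R] (N : Ideal R) (h : R) :
    (Submodule.span R {Ideal.Quotient.mk N h}).annihilator = N.colon (Ideal.span {h}) := by
  ext r
  rw [Submodule.mem_annihilator_span_singleton, Ideal.mem_colon_span_singleton]
  rw [show r • (Ideal.Quotient.mk N h) = Ideal.Quotient.mk N (r • h) from rfl]
  rw [smul_eq_mul, Ideal.Quotient.eq_zero_iff_mem]

open MvPolynomial

/-- A monomial ideal `I` of `K[X_1,…,X_n]` is *polymatroidal* if it is generated by a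
nonempty set of monomials all of the same degree `d` and satisfies the exchange property. -/
def IsPolymatroidal {n : ℕ} {K : Type*} [Field K]
    (I : Ideal (MvPolynomial (Fin n) K)) : Prop :=
  ∃ (d : ℕ) (G : Set (Fin n →₀ ℕ)),
    G.Nonempty ∧
    (∀ a ∈ G, (a.sum fun _ e => e) = d) ∧
    I = Ideal.span ((fun a => (monomial a (1 : K))) '' G) ∧
    (∀ a b : Fin n →₀ ℕ, (a.sum fun _ e => e) = d → (b.sum fun _ e => e) = d →
      monomial a (1 : K) ∈ I → monomial b (1 : K) ∈ I →
      ∀ i : Fin n, b i < a i →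
        ∃ j : Fin n, a j < b j ∧
          monomial (a - Finsupp.single i 1 + Finsupp.single j 1) (1 : K) ∈ I)

/-- For a polymatroidal ideal `I` one has `Ass(R/I^k) ⊆ Ass(R/I^{k+1})` for all `k > 0`. -/
theorem polymatroidal_ass_pow_subset {n : ℕ} {K : Type*} [Field K]
    (I : Ideal (MvPolynomial (Fin n) K)) (hI : IsPolymatroidal I)
    (k : ℕ) (hk : 0 < k) :
    associatedPrimes (MvPolynomial (Fin n) K) (MvPolynomial (Fin n) K ⧸ I ^ k) ⊆
      associatedPrimes (MvPolynomial (Fin n) K) (MvPolynomial (Fin n) K ⧸ I ^ (k + 1)) := by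
  classical
  obtain ⟨d, G, hGne, hGdeg, hIspan, hexI⟩ := hI
  have hsd : ∀ a : Fin n →₀ ℕ, (a.sum fun _ e => e) = Polym.deg a :=
    fun a => Finsupp.sum_fintype _ _ (fun _ => rfl)
  set B : Set (Fin n →₀ ℕ) := {a | Polym.deg a = d ∧ monomial a (1:K) ∈ I} with hB
  have hGB : G ⊆ B := by
    intro g hg
    refine ⟨by rw [← hsd]; exact hGdeg g hg, ?_⟩
    rw [hIspan]
    exact Ideal.subset_span ⟨g, hg, rfl⟩
  have hBne : B.Nonempty := hGne.mono hGB
  have hdeg : ∀ b ∈ B, Polym.deg b = d := fun b hb => hb.1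
  have hBmem : ∀ b ∈ B, monomial b (1:K) ∈ I := fun b hb => hb.2
  have hIB : I = Ideal.span ((fun a => monomial a (1:K)) '' B) := by
    apply le_antisymm
    · conv_lhs => rw [hIspan]
      exact Ideal.span_mono (Set.image_mono hGB)
    · rw [Ideal.span_le]
      rintro p ⟨b, hb, rfl⟩
      exact hBmem b hb
  have hex : ∀ a ∈ B, ∀ b ∈ B, ∀ i : Fin n, b i < a i →
      ∃ j : Fin n, a j < b j ∧ Polym.move a i j ∈ B := by
    intro a ha b hb i hi
    obtain ⟨j, hj, hmem⟩ := hexI a b (by rw [hsd]; exact ha.1) (by rw [hsd]; exact hb.1)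
      ha.2 hb.2 i hi
    refine ⟨j, hj, ?_, hmem⟩
    show Polym.deg (Polym.move a i j) = d
    rw [Polym.deg_move a j (by omega : 1 ≤ a i)]
    exact ha.1
  have hBfin : B.Finite := by
    apply Set.Finite.subset (Set.finite_Iic (Finsupp.equivFunOnFinite.symm (fun _ : Fin n => d)))
    intro b hb
    rw [Set.mem_Iic, Finsupp.le_def]
    intro i
    have h1 : b i ≤ Polym.deg b :=
      Finset.single_le_sum (f := fun i => b i) (fun _ _ => Nat.zero_le _) (Finset.mem_univ i)
    have h2 : b i ≤ d := h1.trans (le_of_eq (hdeg b hb))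
    simpa [Finsupp.equivFunOnFinite] using h2
  intro P hP
  simp only [AssociatedPrimes.mem_iff, isAssociatedPrime_iff, Submodule.bot_colon'] at hP ⊢
  obtain ⟨hprime, x, hann⟩ := hP
  obtain ⟨f, rfl⟩ := Ideal.Quotient.mk_surjective x
  rw [ann_eq_colon] at hann
  have hPQ : ∀ g ∈ hBfin.toFinset,
      P ≤ (I ^ (k+1)).colon (Ideal.span {f * monomial g 1}) := by
    intro g hg r hr
    rw [hann, Ideal.mem_colon_span_singleton] at hr
    rw [Ideal.mem_colon_span_singleton]
    have e : r * (f * monomial g 1) = (r * f) * monomial g 1 := by ring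
    rw [e, pow_succ]
    exact Ideal.mul_mem_mul hr (hBmem g ((Set.Finite.mem_toFinset hBfin).mp hg))
  have hQP : ∃ g ∈ hBfin.toFinset,
      (I ^ (k+1)).colon (Ideal.span {f * monomial g 1}) ≤ P := by
    apply hprime.prod_le.mp
    refine le_trans Ideal.prod_le_inf ?_
    intro r hr
    rw [Submodule.mem_finsetInf] at hr
    have hF : ∀ g ∈ B, (r * f) * monomial g 1 ∈ I ^ (k+1) := by
      intro g hg
      have h := hr g ((Set.Finite.mem_toFinset hBfin).mpr hg)
      rw [Ideal.mem_colon_span_singleton] at h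
      rwa [show r * (f * monomial g 1) = (r * f) * monomial g 1 by ring] at h
    have hcs := PolymAlg.colon_step hBne hdeg hIB hex k (r * f) hF
    rw [hann, Ideal.mem_colon_span_singleton]
    exact hcs
  obtain ⟨g, hgBF, hQle⟩ := hQP
  have hQeq : (I ^ (k+1)).colon (Ideal.span {f * monomial g 1}) = P :=
    le_antisymm hQle (hPQ g hgBF)
  refine ⟨hprime, Ideal.Quotient.mk _ (f * monomial g 1), ?_⟩
  rw [ann_eq_colon, hQeq]
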